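/- Let n ≥ 1, let V be a set, W an additive commutative group, and π_1,…,π_n : V → V maps satisfying π_j ∘ π_j = π_j and π_j ∘ π_k = π_k ∘ π_j for all j, k. Write S_j = {x ∈ V : π_j(x) = x}. Let g_1,…,g_n : V → W be functions that agree on intersections: g_j(x) = g_k(x) whenever x ∈ S_j ∩ S_k. For a nonempty subset α ⊆ {1,…,n} let π_α denote the composition of the maps π_j for j ∈ α (by commutativity the order is immaterial), and define g : V → W by g(x) = Σ_{∅ ≠ α ⊆ {1,…,n}} (−1)^{|α|+1} g_{min α}(π_α(x)). Then g extends every g_j: for every j and every x ∈ S_j one has g(x) = g_j(x). -/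

import Mathlib

/-! Statement 8 -/

def compProj {V : Type*} (π : ℕ → V → V) (α : Finset ℕ) : V → V :=
  (α.sort (· ≤ ·)).foldr (fun j f => π j ∘ f) id

/-- The maps `π k` viewed in the monoid `Function.End V`. -/
def piEnd {V : Type*} (π : ℕ → V → V) (k : ℕ) : Function.End V := π k

lemma compProj_eq_prod {V : Type*} (π : ℕ → V → V) (α : Finset ℕ) :
    compProj π α = (((α.sort (· ≤ ·)).map (piEnd π)).prod : Function.End V) := by
  simp only [compProj, List.prod, List.foldr_map]
  rfl

lemma erase_nonempty_of_ne_singleton {α : Finset ℕ} {j : ℕ} (hj : j ∈ α) (hne : α ≠ {j}) :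
    (α.erase j).Nonempty := by
  rw [Finset.nonempty_iff_ne_empty]
  intro h
  rcases (Finset.erase_eq_empty_iff α j).1 h with h' | h'
  · exact absurd (h' ▸ hj) (Finset.notMem_empty j)
  · exact hne h'

lemma compProj_insert {V : Type*} (π : ℕ → V → V) {n : ℕ}
    (hcomm : ∀ j ∈ Finset.Icc 1 n, ∀ l ∈ Finset.Icc 1 n, π j ∘ π l = π l ∘ π j)
    {j : ℕ} (hj : j ∈ Finset.Icc 1 n) {α : Finset ℕ} (hα : α ⊆ Finset.Icc 1 n)
    (hjα : j ∉ α) : compProj π (insert j α) = π j ∘ compProj π α := by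
  rw [compProj_eq_prod, compProj_eq_prod]
  have hperm : List.Perm (((insert j α).sort (· ≤ ·)).map (piEnd π))
      ((j :: α.sort (· ≤ ·)).map (piEnd π)) := by
    refine List.Perm.map _ ?_
    refine ((Finset.sort_perm_toList _ _).trans (Finset.toList_insert hjα)).trans ?_
    exact List.Perm.cons _ (Finset.sort_perm_toList _ _).symm
  have hpw : (((insert j α).sort (· ≤ ·)).map (piEnd π)).Pairwise Commute := by
    refine List.pairwise_of_forall_mem_list ?_
    intro a ha b hb
    simp only [List.mem_map, Finset.mem_sort] at ha hb
    obtain ⟨a', ha', rfl⟩ := ha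
    obtain ⟨b', hb', rfl⟩ := hb
    have ha'' : a' ∈ Finset.Icc 1 n := by
      rcases Finset.mem_insert.1 ha' with h | h
      · exact h ▸ hj
      · exact hα h
    have hb'' : b' ∈ Finset.Icc 1 n := by
      rcases Finset.mem_insert.1 hb' with h | h
      · exact h ▸ hj
      · exact hα h
    exact hcomm a' ha'' b' hb''
  have := List.Perm.prod_eq' hperm hpw
  rw [this, List.map_cons, List.prod_cons]
  rfl

/-- π k commutes through compProj. -/
lemma compProj_comm {V : Type*} (π : ℕ → V → V) {n : ℕ}
    (hcomm : ∀ j ∈ Finset.Icc 1 n, ∀ l ∈ Finset.Icc 1 n, π j ∘ π l = π l ∘ π j)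
    {k : ℕ} (hk : k ∈ Finset.Icc 1 n) {α : Finset ℕ} (hα : α ⊆ Finset.Icc 1 n) :
    π k ∘ compProj π α = compProj π α ∘ π k := by
  rw [compProj_eq_prod]
  have : Commute (piEnd π k) (((α.sort (· ≤ ·)).map (piEnd π)).prod) := by
    refine Commute.list_prod_right _ _ ?_
    intro b hb
    simp only [List.mem_map, Finset.mem_sort] at hb
    obtain ⟨b', hb', rfl⟩ := hb
    exact hcomm k hk b' (hα hb')
  exact this

/-- The value `compProj π α x` is fixed by `π k` for each `k ∈ α`. -/
lemma compProj_fixed {V : Type*} (π : ℕ → V → V) {n : ℕ}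
    (hidem : ∀ j ∈ Finset.Icc 1 n, π j ∘ π j = π j)
    (hcomm : ∀ j ∈ Finset.Icc 1 n, ∀ l ∈ Finset.Icc 1 n, π j ∘ π l = π l ∘ π j)
    {α : Finset ℕ} (hα : α ⊆ Finset.Icc 1 n) {k : ℕ} (hk : k ∈ α) (x : V) :
    π k (compProj π α x) = compProj π α x := by
  classical
  have hk' : k ∈ Finset.Icc 1 n := hα hk
  have h1 : α = insert k (α.erase k) := (Finset.insert_erase hk).symm
  have h2 : compProj π α = π k ∘ compProj π (α.erase k) := by
    conv_lhs => rw [h1]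
    exact compProj_insert π hcomm hk' (fun m hm => hα (Finset.erase_subset _ _ hm))
      (Finset.notMem_erase _ _)
  have h3 : π k (compProj π α x) = (π k ∘ π k) (compProj π (α.erase k) x) := by
    rw [h2]; rfl
  rw [h3, hidem k hk']
  exact (congrFun h2 x).symm

theorem stmt_8 {V W : Type*} [AddCommGroup W] (n : ℕ) (hn : 1 ≤ n)
    (π : ℕ → V → V)
    (hidem : ∀ j ∈ Finset.Icc 1 n, π j ∘ π j = π j)
    (hcomm : ∀ j ∈ Finset.Icc 1 n, ∀ l ∈ Finset.Icc 1 n, π j ∘ π l = π l ∘ π j)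
    (S : ℕ → Set V) (hS : ∀ j, S j = {x | π j x = x})
    (g : ℕ → V → W)
    (hagree : ∀ j ∈ Finset.Icc 1 n, ∀ l ∈ Finset.Icc 1 n, ∀ x ∈ S j ∩ S l, g j x = g l x) :
    ∀ j ∈ Finset.Icc 1 n, ∀ x ∈ S j,
      (∑ α ∈ (Finset.Icc 1 n).powerset.filter (fun α => α.Nonempty),
        ((-1 : ℤ) ^ (α.card + 1)) • g (α.min.untopD 0) (compProj π α x)) = g j x := by
  classical
  intro j hj x hx
  have hxfix : π j x = x := by rw [hS] at hx; exact hx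
  set f : Finset ℕ → W := fun α => ((-1 : ℤ) ^ (α.card + 1)) • g (α.min.untopD 0) (compProj π α x)
    with hf
  set s := (Finset.Icc 1 n).powerset.filter (fun α => α.Nonempty) with hs
  have hmin : ∀ (α : Finset ℕ) (hne : α.Nonempty), α.min.untopD 0 = α.min' hne := by
    intro α hne
    rw [← Finset.coe_min' hne, WithTop.untopD_coe]
  -- key cancellation
  have key : ∀ β : Finset ℕ, β ⊆ Finset.Icc 1 n → β.Nonempty → j ∉ β →
      f (insert j β) + f β = 0 := by
    intro β hβsub hβne hjβ
    have hins : compProj π (insert j β) = π j ∘ compProj π β :=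
      compProj_insert π hcomm hj hβsub hjβ
    have hval : compProj π (insert j β) x = compProj π β x := by
      rw [hins]
      show π j (compProj π β x) = compProj π β x
      have h2 : π j (compProj π β x) = compProj π β (π j x) :=
        congrFun (compProj_comm π hcomm hj hβsub) x
      rw [h2, hxfix]
    set y := compProj π β x with hy
    have hyfixj : π j y = y := by
      have h2 : π j y = compProj π β (π j x) := congrFun (compProj_comm π hcomm hj hβsub) x
      rw [h2, hxfix]
    have hyfix : ∀ k ∈ β, π k y = y := fun k hk => compProj_fixed π hidem hcomm hβsub hk x
    have hβne' : (insert j β).Nonempty := Finset.insert_nonempty j β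
    have hminsβ : (insert j β).min' hβne' ∈ insert j β := Finset.min'_mem _ _
    have hminβ : β.min' hβne ∈ β := Finset.min'_mem _ _
    have hm1 : ((insert j β).min' hβne') ∈ Finset.Icc 1 n := by
      rcases Finset.mem_insert.1 hminsβ with h | h
      · rw [h]; exact hj
      · exact hβsub h
    have hm2 : β.min' hβne ∈ Finset.Icc 1 n := hβsub hminβ
    have hyS1 : y ∈ S ((insert j β).min' hβne') := by
      rw [hS]
      rcases Finset.mem_insert.1 hminsβ with h | h
      · rw [h]; exact hyfixj
      · exact hyfix _ h
    have hyS2 : y ∈ S (β.min' hβne) := by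
      rw [hS]; exact hyfix _ hminβ
    have hg : g ((insert j β).min' hβne') y = g (β.min' hβne) y :=
      hagree _ hm1 _ hm2 y ⟨hyS1, hyS2⟩
    have hcard : (insert j β).card = β.card + 1 := Finset.card_insert_of_notMem hjβ
    rw [hf]
    simp only [hmin (insert j β) hβne', hmin β hβne, hval, hg, hcard]
    rw [pow_succ]
    simp [add_comm, hy]
  have hjs : ({j} : Finset ℕ) ∈ s := by
    rw [hs]
    simp only [Finset.mem_filter, Finset.mem_powerset]
    exact ⟨Finset.singleton_subset_iff.2 hj, Finset.singleton_nonempty j⟩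
  rw [← Finset.add_sum_erase s f hjs]
  have hzero : (∑ α ∈ s.erase {j}, f α) = 0 := by
    refine Finset.sum_involution
      (fun α _ => if j ∈ α then α.erase j else insert j α) ?_ ?_ ?_ ?_
    · intro α hα
      have hα' := Finset.mem_erase.1 hα
      have hαs := Finset.mem_filter.1 hα'.2
      have hsub : α ⊆ Finset.Icc 1 n := Finset.mem_powerset.1 hαs.1
      have hne : α.Nonempty := hαs.2
      by_cases hjin : j ∈ α
      · simp only [hjin, if_true]
        have hbne : (α.erase j).Nonempty := erase_nonempty_of_ne_singleton hjin hα'.1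
        have := key (α.erase j) (fun m hm => hsub (Finset.erase_subset _ _ hm)) hbne
          (Finset.notMem_erase _ _)
        rw [Finset.insert_erase hjin] at this
        exact this
      · simp only [hjin, if_false]
        rw [add_comm]
        exact key α hsub hne hjin
    · intro α hα _
      by_cases hjin : j ∈ α
      · simp only [hjin, if_true]
        intro hcon
        rw [← hcon] at hjin
        exact Finset.notMem_erase j α hjin
      · simp only [hjin, if_false]
        intro hcon
        exact hjin (hcon ▸ Finset.mem_insert_self j α)
    · intro α hα
      have hα' := Finset.mem_erase.1 hα
      have hαs := Finset.mem_filter.1 hα'.2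
      have hsub : α ⊆ Finset.Icc 1 n := Finset.mem_powerset.1 hαs.1
      have hne : α.Nonempty := hαs.2
      by_cases hjin : j ∈ α
      · simp only [hjin, if_true]
        refine Finset.mem_erase.2 ⟨?_, ?_⟩
        · intro hcon
          have h := Finset.notMem_erase j α
          rw [hcon] at h
          exact h (Finset.mem_singleton_self j)
        · exact Finset.mem_filter.2 ⟨Finset.mem_powerset.2
            (fun m hm => hsub (Finset.erase_subset _ _ hm)),
            erase_nonempty_of_ne_singleton hjin hα'.1⟩
      · simp only [hjin, if_false]
        refine Finset.mem_erase.2 ⟨?_, ?_⟩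
        · intro hcon
          have hsub' : α ⊆ {j} := hcon ▸ Finset.subset_insert j α
          rcases hne with ⟨b, hb⟩
          have hbj := Finset.mem_singleton.1 (hsub' hb)
          exact hjin (hbj ▸ hb)
        · exact Finset.mem_filter.2 ⟨Finset.mem_powerset.2
            (Finset.insert_subset hj hsub), Finset.insert_nonempty j α⟩
    · intro α hα
      by_cases hjin : j ∈ α
      · simp [hjin, Finset.insert_erase hjin]
      · simp [hjin, Finset.notMem_erase, Finset.erase_insert hjin]
  rw [hzero, add_zero, hf]
  have hmin1 : ({j} : Finset ℕ).min.untopD 0 = j := by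
    rw [hmin {j} (Finset.singleton_nonempty j), Finset.min'_singleton]
  have hcomp1 : compProj π {j} x = x := by
    have h1 : ({j} : Finset ℕ).sort (· ≤ ·) = [j] := Finset.sort_singleton _ _
    show compProj π {j} x = x
    simp only [compProj, h1, List.foldr]
    exact hxfix
  show ((-1 : ℤ) ^ (({j} : Finset ℕ).card + 1)) • g (({j} : Finset ℕ).min.untopD 0)
      (compProj π {j} x) = g j x
  rw [hmin1, hcomp1, Finset.card_singleton]
  norm_num
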